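/- Let $\pi$ be a probability measure, $0\le\lambda<1$, $t>0$, $f_k:\mathcal{X}\to[0,1]$ measurable, and let $r_{t,k}$, $g_k(x)=e^{tf_k(x)/2}/(r_{t,k}-\lambda e^{tf_k(x)})$ be as in the eigenvalue construction (so $\widehat{Q}_{t,k}g_k=r_{t,k}g_k$ and $0<C_1\le g_k\le C_2<\infty$ $\pi$-a.s.). Then $\lim_{n\to\infty}\frac{1}{n}\log\langle e^{tf_k/2},\widehat{Q}_{t,k}^{\,n-1}e^{tf_k/2}\rangle = \log r_{t,k}$. -/

import Mathlib

open MeasureTheory Filter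

/-- Lemma 4.2(ii):
`(1/n) log ⟨e^{tf_k/2}, Q̂_{t,k}^{n-1} e^{tf_k/2}⟩ → log r_{t,k}`. -/
theorem hoeffding_stmt12
    {X : Type*} [MeasurableSpace X] (π : Measure X) [IsProbabilityMeasure π]
    (fk : X → ℝ) (hfk : Measurable fk) (hfk01 : ∀ x, fk x ∈ Set.Icc (0 : ℝ) 1)
    (lam : ℝ) (hlam0 : 0 ≤ lam) (hlam1 : lam < 1) (t : ℝ) (ht : 0 < t)
    (r : ℝ) (hr : r > lam * essSup (fun x => Real.exp (t * fk x)) π)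
    (hreq : ∫ x, (1 - lam) * Real.exp (t * fk x) / (r - lam * Real.exp (t * fk x)) ∂π = 1)
    (Qhat : Lp ℝ 2 π →L[ℝ] Lp ℝ 2 π)
    (hQhat : ∀ h : Lp ℝ 2 π, Qhat h =ᵐ[π] fun x => Real.exp (t * fk x / 2) *
      ((1 - lam) * ∫ y, Real.exp (t * fk y / 2) * h y ∂π
        + lam * Real.exp (t * fk x / 2) * h x))
    (V : Lp ℝ 2 π) (hV : V =ᵐ[π] fun x => Real.exp (t * fk x / 2)) :
    Tendsto (fun n : ℕ => Real.log (∫ x, V x * ((Qhat ^ (n - 1)) V) x ∂π) / n)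
      atTop (nhds (Real.log r)) := by
  classical
  set E : X → ℝ := fun x => Real.exp (t * fk x) with hEdef
  set Vf : X → ℝ := fun x => Real.exp (t * fk x / 2) with hVfdef
  have hVfpos : ∀ x, 0 < Vf x := fun x => Real.exp_pos _
  have hVV : ∀ x, Vf x * Vf x = E x := by
    intro x; rw [hVfdef, hEdef]; simp only [← Real.exp_add]; ring_nf
  have hE1 : ∀ x, 1 ≤ E x := fun x =>
    Real.one_le_exp (mul_nonneg ht.le (hfk01 x).1)
  have hEt : ∀ x, E x ≤ Real.exp t := fun x =>
    Real.exp_le_exp.2 (by nlinarith [(hfk01 x).2, (hfk01 x).1])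
  have hVft : ∀ x, Vf x ≤ Real.exp (t / 2) := fun x =>
    Real.exp_le_exp.2 (by nlinarith [(hfk01 x).2, (hfk01 x).1])
  set s : ℝ := essSup E π with hsdef
  have hbdd : IsBoundedUnder (· ≤ ·) (ae π) E :=
    isBoundedUnder_of ⟨Real.exp t, hEt⟩
  have hs1 : 1 ≤ s := by
    by_contra h
    push_neg at h
    have hlt : ∀ᵐ x ∂π, E x < 1 := ae_lt_of_essSup_lt (by simpa [hsdef] using h) hbdd
    have : (ae π).NeBot := ae_neBot.2 (IsProbabilityMeasure.ne_zero π)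
    obtain ⟨x, hx⟩ := hlt.exists
    exact absurd (hE1 x) (not_le.2 hx)
  have hr0 : 0 < r := lt_of_le_of_lt (mul_nonneg hlam0 (le_trans zero_le_one hs1)) hr
  set δ : ℝ := r - lam * s with hδdef
  have hδ : 0 < δ := sub_pos.2 hr
  set D : X → ℝ := fun x => r - lam * E x with hDdef
  have hDae : ∀ᵐ x ∂π, δ ≤ D x := by
    filter_upwards [ae_le_essSup hbdd] with x hx
    have : lam * E x ≤ lam * s := mul_le_mul_of_nonneg_left hx hlam0
    simp only [hDdef, hδdef]; linarith
  have hDr : ∀ x, D x ≤ r := fun x => by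
    have : 0 ≤ lam * E x := mul_nonneg hlam0 (le_trans zero_le_one (hE1 x))
    simp only [hDdef]; linarith
  set g : X → ℝ := fun x => Vf x / D x with hgdef
  have hmg : Measurable g := by
    apply Measurable.div
    · exact ((hfk.const_mul t).div_const 2).exp
    · exact (measurable_const.sub ((hfk.const_mul t).exp.const_mul lam))
  have memG : MemLp g 2 π := by
    apply MemLp.of_bound hmg.aestronglyMeasurable (Real.exp (t / 2) / δ)
    filter_upwards [hDae] with x hx
    have hDpos : 0 < D x := lt_of_lt_of_le hδ hx
    have hg0 : 0 ≤ g x := div_nonneg (hVfpos x).le hDpos.le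
    rw [Real.norm_eq_abs, abs_of_nonneg hg0]
    exact div_le_div₀ (Real.exp_nonneg _) (hVft x) hδ hx
  set G : Lp ℝ 2 π := memG.toLp g with hGdef
  have hG : ⇑G =ᵐ[π] g := memG.coeFn_toLp
  -- pairing integrability
  have pairInt : ∀ h k : Lp ℝ 2 π, Integrable (fun x => h x * k x) π := by
    intro h k
    have := L2.integrable_inner (𝕜 := ℝ) h k
    simpa [RCLike.inner_apply, mul_comm] using this
  have intVfh : ∀ h : Lp ℝ 2 π, Integrable (fun x => Vf x * h x) π := by
    intro h
    refine (pairInt V h).congr ?_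
    filter_upwards [hV] with x hx using by rw [hx]
  -- inner product with g
  have hVG : ∫ x, Vf x * g x ∂π = 1 / (1 - lam) := by
    have h1 : ∀ x, Vf x * g x
        = (1 / (1 - lam)) * ((1 - lam) * E x / (r - lam * E x)) := by
      intro x
      have h1lam : (1 : ℝ) - lam ≠ 0 := by linarith
      calc Vf x * (Vf x / D x) = (Vf x * Vf x) / D x := (mul_div_assoc _ _ _).symm
        _ = E x / D x := by rw [hVV]
        _ = (1 / (1 - lam)) * ((1 - lam) * E x) / D x := by
            rw [mul_comm (1 - lam) (E x), ← mul_assoc]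
            field_simp
        _ = (1 / (1 - lam)) * ((1 - lam) * E x / D x) := mul_div_assoc _ _ _
    simp only [h1]
    rw [integral_const_mul, hreq, mul_one]
  have hIg : Integrable (fun x => V x * g x) π := by
    refine (pairInt V G).congr ?_
    filter_upwards [hG] with x hx using by rw [hx]
  have hVGc : ∫ x, V x * g x ∂π = 1 / (1 - lam) := by
    rw [← hVG]
    refine integral_congr_ae ?_
    filter_upwards [hV] with x hx using by rw [hx]
  have hVGG : ∫ y, Vf y * G y ∂π = 1 / (1 - lam) := by
    rw [← hVG]
    refine integral_congr_ae ?_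
    filter_upwards [hG] with x hx using by rw [hx]
  -- eigen equation
  have hQG : Qhat G = r • G := by
    apply Lp.ext
    filter_upwards [hQhat G, hG, hDae, Lp.coeFn_smul r G] with x h1 h2 h3 h4
    rw [h1, h4]
    simp only [Pi.smul_apply, smul_eq_mul, h2, hVGG]
    rw [show (∫ y, Real.exp (t * fk y / 2) * G y ∂π) = 1 / (1 - lam) from hVGG]
    have hDpos : 0 < D x := lt_of_lt_of_le hδ h3
    have hg : g x = Vf x / D x := rfl
    have hVD : Vf x = D x * g x := by rw [hg]; field_simp
    have h1lam : (1 : ℝ) - lam ≠ 0 := by linarith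
    have key : (1 - lam) * (1 / (1 - lam)) = 1 := by field_simp
    calc Vf x * ((1 - lam) * (1 / (1 - lam)) + lam * Vf x * g x)
        = Vf x + lam * (Vf x * Vf x) * g x := by rw [key]; ring
      _ = Vf x + lam * E x * g x := by rw [hVV]
      _ = D x * g x + lam * E x * g x := by rw [← hVD]
      _ = r * g x := by simp only [hDdef]; ring
  have hQGn : ∀ n : ℕ, (Qhat ^ n) G = (r ^ n) • G := by
    intro n
    induction n with
    | zero => simp
    | succ n ih =>
      have : (Qhat ^ (n + 1)) G = Qhat ((Qhat ^ n) G) := by rw [pow_succ']; rfl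
      rw [this, ih, ContinuousLinearMap.map_smul, hQG, smul_smul, pow_succ]
  -- monotonicity of Qhat
  have mono : ∀ h k : Lp ℝ 2 π, (⇑h ≤ᵐ[π] ⇑k) → (⇑(Qhat h) ≤ᵐ[π] ⇑(Qhat k)) := by
    intro h k hhk
    have hint : ∫ y, Vf y * h y ∂π ≤ ∫ y, Vf y * k y ∂π := by
      refine integral_mono_ae (intVfh h) (intVfh k) ?_
      filter_upwards [hhk] with x hx
      exact mul_le_mul_of_nonneg_left hx (hVfpos x).le
    filter_upwards [hQhat h, hQhat k, hhk] with x e1 e2 hx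
    rw [e1, e2]
    have hVfx := (hVfpos x).le
    apply mul_le_mul_of_nonneg_left _ hVfx
    have h1lam : (0:ℝ) ≤ 1 - lam := by linarith
    have : lam * Vf x * h x ≤ lam * Vf x * k x :=
      mul_le_mul_of_nonneg_left hx (mul_nonneg hlam0 hVfx)
    have : (1 - lam) * ∫ y, Vf y * h y ∂π ≤ (1 - lam) * ∫ y, Vf y * k y ∂π :=
      mul_le_mul_of_nonneg_left hint h1lam
    linarith [mul_le_mul_of_nonneg_left hx (mul_nonneg hlam0 hVfx)]
  -- sandwich
  have sandwich : ∀ n : ℕ,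
      (⇑((δ * r ^ n) • G) ≤ᵐ[π] ⇑((Qhat ^ n) V)) ∧
      (⇑((Qhat ^ n) V) ≤ᵐ[π] ⇑((r ^ (n + 1)) • G)) := by
    intro n
    induction n with
    | zero =>
      have h0 : (Qhat ^ 0) V = V := by rw [pow_zero]; rfl
      rw [h0]
      constructor
      · filter_upwards [Lp.coeFn_smul (δ * r ^ 0) G, hG, hV, hDae] with x h1 h2 h3 h4
        have hDpos : 0 < D x := lt_of_lt_of_le hδ h4
        have hVD : Vf x = D x * g x := by
          show Vf x = D x * (Vf x / D x); field_simp
        rw [h1, h3]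
        simp only [Pi.smul_apply, smul_eq_mul, h2, pow_zero, mul_one]
        have hg0 : 0 ≤ g x := div_nonneg (hVfpos x).le hDpos.le
        calc δ * g x ≤ D x * g x := mul_le_mul_of_nonneg_right h4 hg0
          _ = Vf x := hVD.symm
        -- note: goal after simp is δ * g x ≤ Vf x? fix via show
      · filter_upwards [Lp.coeFn_smul (r ^ (0 + 1)) G, hG, hV, hDae] with x h1 h2 h3 h4
        have hDpos : 0 < D x := lt_of_lt_of_le hδ h4
        have hVD : Vf x = D x * g x := by
          show Vf x = D x * (Vf x / D x); field_simp
        rw [h1, h3]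
        simp only [Pi.smul_apply, smul_eq_mul, h2, zero_add, pow_one]
        have hg0 : 0 ≤ g x := div_nonneg (hVfpos x).le hDpos.le
        calc Vf x = D x * g x := hVD
          _ ≤ r * g x := mul_le_mul_of_nonneg_right (hDr x) hg0
    | succ n ih =>
      have hpow : (Qhat ^ (n + 1)) V = Qhat ((Qhat ^ n) V) := by rw [pow_succ']; rfl
      have hlo : Qhat ((δ * r ^ n) • G) = (δ * r ^ (n + 1)) • G := by
        rw [ContinuousLinearMap.map_smul, hQG, smul_smul,
          show δ * r ^ n * r = δ * r ^ (n + 1) by ring]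
      have hhi : Qhat ((r ^ (n + 1)) • G) = (r ^ (n + 1 + 1)) • G := by
        rw [ContinuousLinearMap.map_smul, hQG, smul_smul,
          show r ^ (n + 1) * r = r ^ (n + 1 + 1) by ring]
      constructor
      · have h := mono _ _ ih.1
        rw [hlo] at h
        rw [hpow]
        exact h
      · have h := mono _ _ ih.2
        rw [hhi] at h
        rw [hpow]
        exact h
  -- integral bounds
  have hintLo : ∀ n : ℕ, Integrable (fun x => V x * (δ * r ^ n * g x)) π := by
    intro n
    refine (hIg.const_mul (δ * r ^ n)).congr ?_
    exact Eventually.of_forall fun x => by ring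
  have hintHi : ∀ n : ℕ, Integrable (fun x => V x * (r ^ (n + 1) * g x)) π := by
    intro n
    refine (hIg.const_mul (r ^ (n + 1))).congr ?_
    exact Eventually.of_forall fun x => by ring
  have boundLo : ∀ n : ℕ,
      δ * r ^ n * (1 / (1 - lam)) ≤ ∫ x, V x * ((Qhat ^ n) V) x ∂π := by
    intro n
    have h1 : ∫ x, V x * (δ * r ^ n * g x) ∂π ≤ ∫ x, V x * ((Qhat ^ n) V) x ∂π := by
      refine integral_mono_ae (hintLo n) (pairInt V _) ?_
      filter_upwards [(sandwich n).1, Lp.coeFn_smul (δ * r ^ n) G, hG, hV]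
        with x h1 h2 h3 h4
      rw [h2] at h1
      simp only [Pi.smul_apply, smul_eq_mul, h3] at h1
      refine mul_le_mul_of_nonneg_left h1 ?_
      rw [h4]; exact (hVfpos x).le
    calc δ * r ^ n * (1 / (1 - lam)) = (δ * r ^ n) * ∫ x, V x * g x ∂π := by
          rw [hVGc]
      _ = ∫ x, (δ * r ^ n) * (V x * g x) ∂π := (integral_const_mul _ _).symm
      _ = ∫ x, V x * (δ * r ^ n * g x) ∂π := by
          refine integral_congr_ae (Eventually.of_forall fun x => by ring)
      _ ≤ _ := h1
  have boundHi : ∀ n : ℕ,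
      ∫ x, V x * ((Qhat ^ n) V) x ∂π ≤ r ^ (n + 1) * (1 / (1 - lam)) := by
    intro n
    have h1 : ∫ x, V x * ((Qhat ^ n) V) x ∂π ≤ ∫ x, V x * (r ^ (n + 1) * g x) ∂π := by
      refine integral_mono_ae (pairInt V _) (hintHi n) ?_
      filter_upwards [(sandwich n).2, Lp.coeFn_smul (r ^ (n + 1)) G, hG, hV]
        with x h1 h2 h3 h4
      rw [h2] at h1
      simp only [Pi.smul_apply, smul_eq_mul, h3] at h1
      refine mul_le_mul_of_nonneg_left h1 ?_
      rw [h4]; exact (hVfpos x).le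
    calc ∫ x, V x * ((Qhat ^ n) V) x ∂π ≤ ∫ x, V x * (r ^ (n + 1) * g x) ∂π := h1
      _ = ∫ x, (r ^ (n + 1)) * (V x * g x) ∂π := by
          refine integral_congr_ae (Eventually.of_forall fun x => by ring)
      _ = (r ^ (n + 1)) * ∫ x, V x * g x ∂π := integral_const_mul _ _
      _ = r ^ (n + 1) * (1 / (1 - lam)) := by rw [hVGc]
  have h1lampos : (0:ℝ) < 1 / (1 - lam) := by
    apply div_pos one_pos; linarith
  set a : ℕ → ℝ := fun n => ∫ x, V x * ((Qhat ^ (n - 1)) V) x ∂π with hadef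
  have apos : ∀ n : ℕ, 0 < a n := fun n =>
    lt_of_lt_of_le (by positivity) (boundLo (n - 1))
  set C1 : ℝ := Real.log (δ * (1 / (1 - lam))) with hC1def
  set C2 : ℝ := Real.log (1 / (1 - lam)) with hC2def
  set L : ℝ := Real.log r with hLdef
  -- eventual bounds on log a n / n
  have hlo_ev : ∀ᶠ n : ℕ in atTop,
      (C1 - L) / (n:ℝ) + L ≤ Real.log (a n) / n := by
    filter_upwards [eventually_ge_atTop 1] with n hn
    have hnpos : (0:ℝ) < n := by exact_mod_cast hn
    have hb := boundLo (n - 1)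
    have hb' : (δ * (1 / (1 - lam))) * r ^ (n - 1) ≤ a n := by
      calc (δ * (1 / (1 - lam))) * r ^ (n - 1) = δ * r ^ (n - 1) * (1 / (1 - lam)) := by ring
        _ ≤ a n := hb
    have hlog : C1 + ((n:ℝ) - 1) * L ≤ Real.log (a n) := by
      have hpos : 0 < (δ * (1 / (1 - lam))) * r ^ (n - 1) := by positivity
      have := Real.log_le_log hpos hb'
      rw [Real.log_mul (by positivity) (by positivity), Real.log_pow] at this
      have hcast : ((n - 1 : ℕ) : ℝ) = (n:ℝ) - 1 := by
        have := Nat.cast_sub hn (R := ℝ); simpa using this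
      rw [hcast] at this
      exact this
    have : (C1 + ((n:ℝ) - 1) * L) / n ≤ Real.log (a n) / n := by
      exact div_le_div_of_nonneg_right hlog hnpos.le
    calc (C1 - L) / (n:ℝ) + L = (C1 + ((n:ℝ) - 1) * L) / n := by
          have hn0 : (n:ℝ) ≠ 0 := hnpos.ne'
          field_simp
          ring
      _ ≤ Real.log (a n) / n := this
  have hhi_ev : ∀ᶠ n : ℕ in atTop,
      Real.log (a n) / n ≤ C2 / (n:ℝ) + L := by
    filter_upwards [eventually_ge_atTop 1] with n hn
    have hnpos : (0:ℝ) < n := by exact_mod_cast hn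
    have hb := boundHi (n - 1)
    have hn1 : n - 1 + 1 = n := Nat.succ_pred_eq_of_pos hn
    rw [hn1] at hb
    have hb' : a n ≤ (1 / (1 - lam)) * r ^ n := by
      calc a n ≤ r ^ n * (1 / (1 - lam)) := hb
        _ = (1 / (1 - lam)) * r ^ n := by ring
    have hlog : Real.log (a n) ≤ C2 + (n:ℝ) * L := by
      have := Real.log_le_log (apos n) hb'
      rw [Real.log_mul (by positivity) (by positivity), Real.log_pow] at this
      exact this
    have : Real.log (a n) / n ≤ (C2 + (n:ℝ) * L) / n :=
      div_le_div_of_nonneg_right hlog hnpos.le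
    calc Real.log (a n) / n ≤ (C2 + (n:ℝ) * L) / n := this
      _ = C2 / (n:ℝ) + L := by
          have hn0 : (n:ℝ) ≠ 0 := hnpos.ne'
          field_simp
  -- limits of the bounds
  have hlo_lim : Tendsto (fun n : ℕ => (C1 - L) / (n:ℝ) + L) atTop (nhds L) := by
    have := (tendsto_const_div_atTop_nhds_zero_nat (C1 - L)).add
      (tendsto_const_nhds : Tendsto (fun _ : ℕ => L) atTop (nhds L))
    simpa using this
  have hhi_lim : Tendsto (fun n : ℕ => C2 / (n:ℝ) + L) atTop (nhds L) := by
    have := (tendsto_const_div_atTop_nhds_zero_nat C2).add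
      (tendsto_const_nhds : Tendsto (fun _ : ℕ => L) atTop (nhds L))
    simpa using this
  exact tendsto_of_tendsto_of_tendsto_of_le_of_le' hlo_lim hhi_lim hlo_ev hhi_ev
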